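/- Let (X,d) and (Λ,ρ) be compact metric spaces, ω : Λ × X → X continuous, p a Borel probability measure on Λ with p(U) > 0 for every nonempty open U ⊆ Λ, and suppose ω is ℙ-weakly hyperbolic for ℙ = p^ℕ. Let μ_p be the unique fixed point of the transfer operator T_p and Γ : S → X the coding map. Then supp(μ_p) = closure(Γ(S)). -/

import Mathlib

open Metric Set Filter MeasureTheory

def hcomp {Λ X : Type*} (ω : Λ → X → X) (σ : ℕ → Λ) : ℕ → X → X
  | 0 => id
  | n + 1 => hcomp ω σ n ∘ ω (σ n)

def IsBernoulli {Λ : Type*} [MeasurableSpace Λ]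
    (p : Measure Λ) (P : Measure (ℕ → Λ)) : Prop :=
  IsProbabilityMeasure P ∧
    ∀ (n : ℕ) (A : ℕ → Set Λ), (∀ i, MeasurableSet (A i)) →
      P {σ | ∀ i < n, σ i ∈ A i} = ∏ i ∈ Finset.range n, p (A i)

def Sset {Λ X : Type*} [MetricSpace X] (ω : Λ → X → X) : Set (ℕ → Λ) :=
  {σ | Tendsto (fun n => Metric.diam (Set.range (hcomp ω σ n))) atTop (nhds 0)}

/-- The transfer (Markov) operator `T_p`, defined on probability measures by
`T_p(μ)(B) = ∫_Λ μ(ω_λ⁻¹(B)) dp(λ)`, i.e. as the pushforward of `p × μ` under `ω`. -/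
noncomputable def transferOp {X Λ : Type*}
    [MetricSpace X] [CompactSpace X] [MeasurableSpace X] [BorelSpace X]
    [MetricSpace Λ] [CompactSpace Λ] [MeasurableSpace Λ] [BorelSpace Λ]
    (ω : Λ → X → X) (hω : Continuous fun q : Λ × X => ω q.1 q.2)
    (p : Measure Λ) [IsProbabilityMeasure p]
    (μ : ProbabilityMeasure X) : ProbabilityMeasure X :=
  ⟨(p.prod μ.toMeasure).map (fun q : Λ × X => ω q.1 q.2), by
    have : IsProbabilityMeasure (p.prod μ.toMeasure) := by
      have := μ.2; infer_instance
    exact Measure.isProbabilityMeasure_map hω.measurable.aemeasurable⟩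

/-- The (closed) support of a measure: the set of points all of whose open
neighbourhoods have positive measure. -/
def msupport {X : Type*} [TopologicalSpace X] [MeasurableSpace X]
    (μ : Measure X) : Set X :=
  {x | ∀ U : Set X, IsOpen U → x ∈ U → μ U ≠ 0}

set_option linter.unusedSectionVars false
section Aux
variable {X Λ : Type*} [MetricSpace X] [CompactSpace X]
    [MeasurableSpace X] [BorelSpace X]
    [MetricSpace Λ] [CompactSpace Λ] [MeasurableSpace Λ] [BorelSpace Λ]
    {ω : Λ → X → X}

lemma hcomp_cont (hω : Continuous fun q : Λ × X => ω q.1 q.2) (n : ℕ) :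
    Continuous fun q : (ℕ → Λ) × X => hcomp ω q.1 n q.2 := by
  induction n with
  | zero => exact continuous_snd
  | succ n ih =>
    have h : (fun q : (ℕ → Λ) × X => hcomp ω q.1 (n+1) q.2)
        = (fun q : (ℕ → Λ) × X => hcomp ω q.1 n q.2) ∘
          (fun q : (ℕ → Λ) × X => (q.1, ω (q.1 n) q.2)) := rfl
    rw [h]
    refine ih.comp (continuous_fst.prodMk ?_)
    have : (fun q : (ℕ → Λ) × X => ω (q.1 n) q.2)
        = (fun q : Λ × X => ω q.1 q.2) ∘ (fun q : (ℕ → Λ) × X => (q.1 n, q.2)) := rfl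
    rw [this]
    exact hω.comp (((continuous_apply n).comp continuous_fst).prodMk continuous_snd)

lemma hcomp_shift (σ : ℕ → Λ) (n : ℕ) :
    hcomp ω σ (n+1) = fun x => ω (σ 0) (hcomp ω (fun i => σ (i+1)) n x) := by
  induction n with
  | zero => rfl
  | succ n ih =>
    funext x
    have h1 : hcomp ω σ (n+2) x = hcomp ω σ (n+1) (ω (σ (n+1)) x) := rfl
    rw [h1, ih]; rfl

lemma hcomp_congr (σ τ : ℕ → Λ) (n : ℕ) (h : ∀ i < n, σ i = τ i) :
    hcomp ω σ n = hcomp ω τ n := by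
  induction n with
  | zero => rfl
  | succ n ih =>
    show hcomp ω σ n ∘ ω (σ n) = hcomp ω τ n ∘ ω (τ n)
    rw [ih (fun i hi => h i (Nat.lt_succ_of_lt hi)), h n (Nat.lt_succ_self n)]
end Aux

section Shift
variable {Λ : Type*} [MeasurableSpace Λ]

def consSet {α : Type*} (A : Set α) (B : ℕ → Set α) : ℕ → Set α
  | 0 => A
  | n+1 => B n

def Cyl (Λ : Type*) [MeasurableSpace Λ] : Set (Set (ℕ → Λ)) :=
  {s | ∃ (n : ℕ) (A : ℕ → Set Λ), (∀ i, MeasurableSet (A i)) ∧ s = {σ : ℕ → Λ | ∀ i < n, σ i ∈ A i}}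

lemma cyl_meas {n : ℕ} {A : ℕ → Set Λ} (hA : ∀ i, MeasurableSet (A i)) :
    MeasurableSet {σ : ℕ → Λ | ∀ i < n, σ i ∈ A i} := by
  have : {σ : ℕ → Λ | ∀ i < n, σ i ∈ A i} = ⋂ i ∈ Finset.range n, (fun σ : ℕ → Λ => σ i) ⁻¹' A i := by
    ext σ; simp
  rw [this]
  exact MeasurableSet.biInter (Finset.range n).countable_toSet
    (fun i _ => measurable_pi_apply i (hA i))

lemma cyl_pi : IsPiSystem (Cyl Λ) := by
  rintro s ⟨n, A, hA, rfl⟩ t ⟨m, B, hB, rfl⟩ -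
  refine ⟨max n m, fun i => (if i < n then A i else Set.univ) ∩ (if i < m then B i else Set.univ),
    fun i => ?_, ?_⟩
  · by_cases h1 : i < n <;> by_cases h2 : i < m <;> simp [h1, h2, hA i, hB i]
  · ext σ
    simp only [Set.mem_inter_iff, Set.mem_setOf_eq]
    constructor
    · rintro ⟨h1, h2⟩ i hi
      constructor
      · split_ifs with h
        exacts [h1 i h, Set.mem_univ _]
      · split_ifs with h
        exacts [h2 i h, Set.mem_univ _]
    · intro h
      constructor
      · intro i hi
        have := (h i (lt_max_iff.mpr (Or.inl hi))).1
        rwa [if_pos hi] at this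
      · intro i hi
        have := (h i (lt_max_iff.mpr (Or.inr hi))).2
        rwa [if_pos hi] at this

lemma cyl_gen : MeasurableSpace.generateFrom (Cyl Λ) = MeasurableSpace.pi := by
  refine le_antisymm ?_ ?_
  · rw [MeasurableSpace.generateFrom_le_iff]
    rintro s ⟨n, A, hA, rfl⟩
    exact cyl_meas hA
  · refine iSup_le fun i => ?_
    rw [← measurable_iff_comap_le]
    intro A hA
    refine MeasurableSpace.measurableSet_generateFrom
      ⟨i+1, fun j => if j = i then A else Set.univ, fun j => ?_, ?_⟩
    · dsimp only
      split_ifs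
      exacts [hA, MeasurableSet.univ]
    · ext σ
      simp only [Set.mem_preimage, Set.mem_setOf_eq]
      constructor
      · intro h j hj
        split_ifs with hji
        · rwa [hji]
        · exact Set.mem_univ _
      · intro h
        have := h i (Nat.lt_succ_self i)
        rwa [if_pos rfl] at this

lemma shift_map (p : Measure Λ) (P : Measure (ℕ → Λ)) [IsProbabilityMeasure p]
    (hP : IsBernoulli p P) :
    P.map (fun σ => (σ 0, fun i => σ (i+1))) = p.prod P := by
  have hF : Measurable fun σ : ℕ → Λ => (σ 0, fun i => σ (i+1)) :=
    (measurable_pi_apply 0).prodMk (measurable_pi_lambda _ fun i => measurable_pi_apply (i+1))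
  haveI := hP.1
  haveI : IsProbabilityMeasure (P.map (fun σ : ℕ → Λ => (σ 0, fun i => σ (i+1)))) :=
    Measure.isProbabilityMeasure_map hF.aemeasurable
  have hcs1 : IsCountablySpanning {s : Set Λ | MeasurableSet s} :=
    ⟨fun _ => Set.univ, fun _ => MeasurableSet.univ, Set.iUnion_const _⟩
  have hcs2 : IsCountablySpanning (Cyl Λ) := by
    refine ⟨fun _ => Set.univ, fun _ => ⟨0, fun _ => Set.univ, fun _ => MeasurableSet.univ, ?_⟩,
      Set.iUnion_const _⟩
    ext σ; simp
  refine ext_of_generate_finite _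
    (generateFrom_eq_prod MeasurableSpace.generateFrom_measurableSet cyl_gen hcs1 hcs2).symm
    (IsPiSystem.prod (fun s hs t ht _ => hs.inter ht) cyl_pi) ?_ (by simp)
  rintro s ⟨A, hA, t, ⟨n, B, hB, rfl⟩, rfl⟩
  have hA' : MeasurableSet A := hA
  rw [Measure.map_apply hF (hA'.prod (cyl_meas hB)), Measure.prod_prod]
  have hpre : (fun σ : ℕ → Λ => (σ 0, fun i => σ (i+1))) ⁻¹'
      (A ×ˢ {σ : ℕ → Λ | ∀ i < n, σ i ∈ B i})
      = {σ : ℕ → Λ | ∀ i < n + 1, σ i ∈ consSet A B i} := by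
    ext σ
    simp only [Set.mem_preimage, Set.mem_prod, Set.mem_setOf_eq]
    constructor
    · rintro ⟨h0, h1⟩ i hi
      cases i with
      | zero => exact h0
      | succ j => exact h1 j (Nat.succ_lt_succ_iff.mp hi)
    · intro h
      exact ⟨h 0 (Nat.succ_pos n), fun i hi => h (i+1) (Nat.succ_lt_succ hi)⟩
  rw [hpre, hP.2 (n+1) _ (fun i => by cases i with | zero => exact hA' | succ j => exact hB j)]
  have : ∀ k, consSet A B (k+1) = B k := fun k => rfl
  rw [Finset.prod_range_succ', hP.2 n B hB]
  simp only [this]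
  exact mul_comm _ _

end Shift

section Key
variable {X Λ : Type*} [MetricSpace X] [CompactSpace X]
    [MeasurableSpace X] [BorelSpace X]
    [MetricSpace Λ] [CompactSpace Λ] [MeasurableSpace Λ] [BorelSpace Λ]
    {ω : Λ → X → X}

lemma meas_hcomp_pre (hω : Continuous fun q : Λ × X => ω q.1 q.2)
    (μ : Measure X) [SFinite μ] (n : ℕ) {B : Set X} (hB : MeasurableSet B) :
    Measurable fun σ : ℕ → Λ => μ (hcomp ω σ n ⁻¹' B) :=
  measurable_measure_prodMk_left ((hcomp_cont hω n).measurable hB)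

lemma key_iter (hω : Continuous fun q : Λ × X => ω q.1 q.2)
    (p : Measure Λ) [IsProbabilityMeasure p]
    (P : Measure (ℕ → Λ)) (hP : IsBernoulli p P)
    (μp : ProbabilityMeasure X)
    (hfix : transferOp ω hω p μp = μp) (n : ℕ) :
    ∀ B : Set X, MeasurableSet B →
      ∫⁻ σ, (μp : Measure X) (hcomp ω σ n ⁻¹' B) ∂P = (μp : Measure X) B := by
  haveI := hP.1
  have hfix' : ∀ B : Set X, MeasurableSet B →
      (μp : Measure X) B = ∫⁻ l, (μp : Measure X) (ω l ⁻¹' B) ∂p := by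
    intro B hB
    have h1 : ((p.prod (μp : Measure X)).map (fun q : Λ × X => ω q.1 q.2)) B
        = (μp : Measure X) B :=
      congrArg (fun m : ProbabilityMeasure X => (m : Measure X) B) hfix
    rw [← h1, Measure.map_apply hω.measurable hB, Measure.prod_apply (hω.measurable hB)]
    rfl
  induction n with
  | zero =>
    intro B hB
    have : ∀ σ : ℕ → Λ, hcomp ω σ 0 ⁻¹' B = B := fun σ => rfl
    simp only [this, lintegral_const, measure_univ, mul_one]
  | succ n ih =>
    intro B hB
    have hF : Measurable fun σ : ℕ → Λ => (σ 0, fun i => σ (i+1)) :=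
      (measurable_pi_apply 0).prodMk (measurable_pi_lambda _ fun i => measurable_pi_apply (i+1))
    have hHc : Continuous fun r : (Λ × (ℕ → Λ)) × X => ω r.1.1 (hcomp ω r.1.2 n r.2) := by
      have h2 : Continuous fun r : (Λ × (ℕ → Λ)) × X => hcomp ω r.1.2 n r.2 :=
        (hcomp_cont hω n).comp (continuous_fst.snd.prodMk continuous_snd)
      show Continuous ((fun q : Λ × X => ω q.1 q.2) ∘
        fun r : (Λ × (ℕ → Λ)) × X => (r.1.1, hcomp ω r.1.2 n r.2))
      exact hω.comp (continuous_fst.fst.prodMk h2)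
    have hG : Measurable fun q : Λ × (ℕ → Λ) =>
        (μp : Measure X) (hcomp ω q.2 n ⁻¹' (ω q.1 ⁻¹' B)) :=
      measurable_measure_prodMk_left (hHc.measurable hB)
    have hstep : ∀ σ : ℕ → Λ, hcomp ω σ (n+1) ⁻¹' B
        = hcomp ω (fun i => σ (i+1)) n ⁻¹' (ω (σ 0) ⁻¹' B) := by
      intro σ
      rw [hcomp_shift]
      rfl
    calc ∫⁻ σ, (μp : Measure X) (hcomp ω σ (n+1) ⁻¹' B) ∂P
        = ∫⁻ σ, (fun q : Λ × (ℕ → Λ) => (μp : Measure X) (hcomp ω q.2 n ⁻¹' (ω q.1 ⁻¹' B)))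
            ((fun σ : ℕ → Λ => (σ 0, fun i => σ (i+1))) σ) ∂P := by
          refine lintegral_congr fun σ => ?_
          rw [hstep σ]
      _ = ∫⁻ q, (μp : Measure X) (hcomp ω q.2 n ⁻¹' (ω q.1 ⁻¹' B))
            ∂(P.map (fun σ : ℕ → Λ => (σ 0, fun i => σ (i+1)))) := (lintegral_map hG hF).symm
      _ = ∫⁻ q, (μp : Measure X) (hcomp ω q.2 n ⁻¹' (ω q.1 ⁻¹' B)) ∂(p.prod P) := by
          rw [shift_map p P hP]
      _ = ∫⁻ l, ∫⁻ τ, (μp : Measure X) (hcomp ω τ n ⁻¹' (ω l ⁻¹' B)) ∂P ∂p :=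
          lintegral_prod _ hG.aemeasurable
      _ = ∫⁻ l, (μp : Measure X) (ω l ⁻¹' B) ∂p := by
          refine lintegral_congr fun l => ?_
          have hc : Continuous (ω l) := hω.comp (Continuous.prodMk_right l)
          exact ih (ω l ⁻¹' B) (hc.measurable hB)
      _ = (μp : Measure X) B := (hfix' B hB).symm
end Key


theorem stmt13 {X Λ : Type*} [MetricSpace X] [CompactSpace X]
    [MeasurableSpace X] [BorelSpace X]
    [MetricSpace Λ] [CompactSpace Λ] [MeasurableSpace Λ] [BorelSpace Λ]
    (ω : Λ → X → X) (hω : Continuous fun q : Λ × X => ω q.1 q.2)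
    (p : Measure Λ) [IsProbabilityMeasure p]
    (hpos : ∀ U : Set Λ, IsOpen U → U.Nonempty → 0 < p U)
    (P : Measure (ℕ → Λ)) (hP : IsBernoulli p P)
    (hS : P (Sset ω) = 1)
    (μp : ProbabilityMeasure X) (hfix : transferOp ω hω p μp = μp)
    (Γ : (ℕ → Λ) → X)
    (hΓ : ∀ σ ∈ Sset ω, ∀ x : X,
      Filter.Tendsto (fun n => hcomp ω σ n x) atTop (nhds (Γ σ))) :
    msupport (μp : Measure X) = closure (Γ '' Sset ω) := by
  haveI hPP := hP.1
  have hXne : Nonempty X := by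
    by_contra h
    rw [not_nonempty_iff] at h
    have h1 : (μp : Measure X) Set.univ = 1 := measure_univ
    rw [Set.univ_eq_empty_iff.mpr h, measure_empty] at h1
    exact zero_ne_one h1
  obtain ⟨x₀⟩ := hXne
  have hbdd : ∀ n (σ : ℕ → Λ), Bornology.IsBounded (Set.range (hcomp ω σ n)) :=
    fun n σ => isCompact_univ.isBounded.subset (Set.subset_univ _)
  apply Set.Subset.antisymm
  · -- msupport ⊆ closure (Γ '' S)
    intro x hx
    by_contra hxc
    obtain ⟨ε, hε, hb⟩ := Metric.isOpen_iff.mp isClosed_closure.isOpen_compl x hxc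
    set K := Metric.closedBall x (ε/2) with hK
    have hΓdist : ∀ σ ∈ Sset ω, ε ≤ dist (Γ σ) x := by
      intro σ hσ
      by_contra hlt
      push_neg at hlt
      exact hb (Metric.mem_ball.mpr hlt) (subset_closure ⟨σ, hσ, rfl⟩)
    set f : ℕ → (ℕ → Λ) → ENNReal := fun n σ => (μp : Measure X) (hcomp ω σ n ⁻¹' K) with hf
    have hKm : MeasurableSet K := Metric.isClosed_closedBall.measurableSet
    have hfm : ∀ n, Measurable (f n) := fun n => meas_hcomp_pre hω _ n hKm
    have hf1 : ∀ n σ, f n σ ≤ 1 := fun n σ =>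
      (measure_mono (Set.subset_univ _)).trans_eq measure_univ
    have hvanish : ∀ σ ∈ Sset ω, ∃ N, ∀ n ≥ N, f n σ = 0 := by
      intro σ hσ
      have hdiam : ∀ᶠ n in atTop, Metric.diam (Set.range (hcomp ω σ n)) < ε/8 :=
        hσ.eventually (gt_mem_nhds (by positivity))
      have hdist : ∀ᶠ n in atTop, dist (hcomp ω σ n x₀) (Γ σ) < ε/8 :=
        Metric.tendsto_nhds.mp (hΓ σ hσ x₀) _ (by positivity)
      obtain ⟨N, hN⟩ := eventually_atTop.mp (hdiam.and hdist)
      refine ⟨N, fun n hn => ?_⟩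
      obtain ⟨h1, h2⟩ := hN n hn
      have hempty : hcomp ω σ n ⁻¹' K = ∅ := by
        ext z
        simp only [Set.mem_preimage, Set.mem_empty_iff_false, iff_false]
        intro hzK
        have hd1 : dist (hcomp ω σ n z) (hcomp ω σ n x₀)
            ≤ Metric.diam (Set.range (hcomp ω σ n)) :=
          Metric.dist_le_diam_of_mem (hbdd n σ) ⟨z, rfl⟩ ⟨x₀, rfl⟩
        have hd2 : dist (hcomp ω σ n z) (Γ σ) < ε/4 :=
          lt_of_le_of_lt (dist_triangle _ (hcomp ω σ n x₀) _) (by linarith)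
        have hKz : dist (hcomp ω σ n z) x ≤ ε/2 := Metric.mem_closedBall.mp hzK
        have hΓx : ε ≤ dist (Γ σ) x := hΓdist σ hσ
        have htri := dist_triangle (Γ σ) (hcomp ω σ n z) x
        rw [dist_comm (Γ σ) (hcomp ω σ n z)] at htri
        linarith
      show (μp : Measure X) (hcomp ω σ n ⁻¹' K) = 0
      rw [hempty, measure_empty]
    set g : (ℕ → Λ) → ENNReal := fun σ => ⨅ N, ⨆ m, f (m + N) σ with hg
    have hgm : Measurable g :=
      Measurable.iInf fun N => Measurable.iSup fun m => hfm (m + N)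
    have hgS : ∀ σ ∈ Sset ω, g σ = 0 := by
      intro σ hσ
      obtain ⟨N, hN⟩ := hvanish σ hσ
      refine le_antisymm ((iInf_le _ N).trans (iSup_le fun m => ?_)) zero_le
      rw [hN (m + N) (Nat.le_add_left N m)]
    have hT : P {σ | g σ = 0}ᶜ = 0 := by
      have hTm : MeasurableSet {σ | g σ = 0} := hgm (measurableSet_singleton 0)
      have h1 : P {σ | g σ = 0} = 1 :=
        le_antisymm prob_le_one (hS ▸ measure_mono (fun σ hσ => hgS σ hσ))
      rw [measure_compl hTm (measure_ne_top P _), h1, measure_univ, tsub_self]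
    have hint : ∫⁻ σ, g σ ∂P = 0 := by
      rw [lintegral_eq_zero_iff hgm]
      refine ae_iff.mpr ?_
      exact hT
    have hμK : (μp : Measure X) K = 0 := by
      have hle : ∀ N, (μp : Measure X) K ≤ ∫⁻ σ, ⨆ m, f (m + N) σ ∂P := by
        intro N
        rw [← key_iter hω p P hP μp hfix N K hKm]
        refine lintegral_mono fun σ => ?_
        have := le_iSup (fun m => f (m + N) σ) 0
        simpa using this
      have hmono : Antitone fun N => fun σ => ⨆ m, f (m + N) σ := by
        intro N M hNM
        intro σ
        refine iSup_le fun m => ?_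
        have hmm : m + M = (m + (M - N)) + N := by omega
        rw [hmm]
        exact le_iSup (fun k => f (k + N) σ) (m + (M - N))
      have hfin : ∫⁻ σ, ⨆ m, f (m + 0) σ ∂P ≠ ⊤ := by
        refine ne_of_lt (lt_of_le_of_lt
          (lintegral_mono fun σ => iSup_le fun m => hf1 _ _) ?_)
        simp [measure_univ]
      have hiInf := lintegral_iInf
        (fun N => Measurable.iSup fun m => hfm (m + N)) hmono hfin
      have h2 : (μp : Measure X) K ≤ ⨅ N, ∫⁻ σ, ⨆ m, f (m + N) σ ∂P := le_iInf hle
      rw [← hiInf] at h2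
      have h3 : ∫⁻ σ, ⨅ N, ⨆ m, f (m + N) σ ∂P = 0 := hint
      rw [h3] at h2
      exact le_antisymm h2 zero_le
    have hU : (μp : Measure X) (Metric.ball x (ε/2)) = 0 :=
      measure_mono_null Metric.ball_subset_closedBall hμK
    exact hx _ Metric.isOpen_ball (Metric.mem_ball_self (by positivity)) hU
  · -- closure (Γ '' S) ⊆ msupport
    have hclosed : IsClosed (msupport (μp : Measure X)) := by
      rw [← isOpen_compl_iff, isOpen_iff_mem_nhds]
      intro y hy
      simp only [msupport, Set.mem_compl_iff, Set.mem_setOf_eq] at hy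
      push_neg at hy
      obtain ⟨U, hUo, hyU, hU0⟩ := hy
      refine Filter.mem_of_superset (hUo.mem_nhds hyU) ?_
      intro z hz hzsupp
      exact hzsupp U hUo hz hU0
    refine closure_minimal ?_ hclosed
    rintro _ ⟨σ, hσ, rfl⟩ U hUo hΓU
    obtain ⟨ε, hε, hball⟩ := Metric.isOpen_iff.mp hUo _ hΓU
    have hdiam : ∀ᶠ n in atTop, Metric.diam (Set.range (hcomp ω σ n)) < ε/4 :=
      hσ.eventually (gt_mem_nhds (by positivity))
    have hdist : ∀ᶠ n in atTop, dist (hcomp ω σ n x₀) (Γ σ) < ε/4 :=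
      Metric.tendsto_nhds.mp (hΓ σ hσ x₀) _ (by positivity)
    obtain ⟨n, h1, h2⟩ := (hdiam.and hdist).exists
    have hrange : ∀ x, hcomp ω σ n x ∈ Metric.ball (Γ σ) ε := by
      intro x
      have hd1 : dist (hcomp ω σ n x) (hcomp ω σ n x₀)
          ≤ Metric.diam (Set.range (hcomp ω σ n)) :=
        Metric.dist_le_diam_of_mem (hbdd n σ) ⟨x, rfl⟩ ⟨x₀, rfl⟩
      have := dist_triangle (hcomp ω σ n x) (hcomp ω σ n x₀) (Γ σ)
      rw [Metric.mem_ball]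
      linarith
    set W : Set ((ℕ → Λ) × X) :=
      (fun q : (ℕ → Λ) × X => hcomp ω q.1 n q.2) ⁻¹' Metric.ball (Γ σ) ε with hW
    have hWo : IsOpen W := (hcomp_cont hω n).isOpen_preimage _ Metric.isOpen_ball
    have hsub : ({σ} : Set (ℕ → Λ)) ×ˢ (Set.univ : Set X) ⊆ W := by
      intro q hq
      have hq1 : q.1 = σ := hq.1
      show hcomp ω q.1 n q.2 ∈ Metric.ball (Γ σ) ε
      rw [hq1]
      exact hrange q.2
    obtain ⟨u, v, hu, hv, hσu, hvuniv, huv⟩ :=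
      generalized_tube_lemma isCompact_singleton isCompact_univ hWo hsub
    obtain ⟨I, t, htI, htsub⟩ := isOpen_pi_iff.mp hu σ (hσu rfl)
    set m := (I.sup id) + 1 with hm
    set A : ℕ → Set Λ := fun i => if i ∈ I then t i else Set.univ with hA
    have hAm : ∀ i, MeasurableSet (A i) := by
      intro i
      by_cases hi : i ∈ I
      · simpa [hA, hi] using ((htI i hi).1).measurableSet
      · simp [hA, hi]
    have hCmeas : MeasurableSet {τ : ℕ → Λ | ∀ i < m, τ i ∈ A i} := cyl_meas hAm
    have hPC : 0 < P {τ : ℕ → Λ | ∀ i < m, τ i ∈ A i} := by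
      rw [hP.2 m A hAm, pos_iff_ne_zero, Finset.prod_ne_zero_iff]
      intro i _
      by_cases hi : i ∈ I
      · simp only [hA, if_pos hi]
        exact (hpos (t i) (htI i hi).1 ⟨σ i, (htI i hi).2⟩).ne'
      · simp [hA, hi, measure_univ]
    have hone : ∀ τ ∈ {τ : ℕ → Λ | ∀ i < m, τ i ∈ A i},
        (μp : Measure X) (hcomp ω τ n ⁻¹' U) = 1 := by
      intro τ hτ
      have hτu : τ ∈ u := by
        apply htsub
        intro i hi
        have hlt : i < m := Nat.lt_succ_of_le (Finset.le_sup (f := id) hi)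
        have := hτ i hlt
        simpa [hA, Finset.mem_coe.mp hi] using this
      have huniv : hcomp ω τ n ⁻¹' U = Set.univ := by
        ext z
        simp only [Set.mem_preimage, Set.mem_univ, iff_true]
        have hWmem : (τ, z) ∈ W :=
          huv (Set.mem_prod.mpr ⟨hτu, hvuniv (Set.mem_univ z)⟩)
        exact hball hWmem
      rw [huniv, measure_univ]
    have hge : P {τ : ℕ → Λ | ∀ i < m, τ i ∈ A i}
        ≤ ∫⁻ τ, (μp : Measure X) (hcomp ω τ n ⁻¹' U) ∂P := by
      rw [← lintegral_indicator_one hCmeas]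
      refine lintegral_mono fun τ => ?_
      by_cases hτ : τ ∈ {τ : ℕ → Λ | ∀ i < m, τ i ∈ A i}
      · rw [Set.indicator_of_mem hτ, hone τ hτ]
        exact le_rfl
      · rw [Set.indicator_of_notMem hτ]
        exact zero_le
    rw [key_iter hω p P hP μp hfix n U hUo.measurableSet] at hge
    exact fun h0 => (hPC.trans_le hge).ne' h0
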